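/- arXiv:2605.11503 — 3 statements merged into one kernel-verified Lean document; each statement's English description precedes it below -/
import Mathlib

section
/- Let G = (P ∪ B, E) be a finite galactic graph, S, T ⊆ P with |S| = |T| = n and with no black hole in the closed neighborhood N[S ∪ T]. Let W ⊆ P ∪ B be either (Rule 1) W = {u, v} for two adjacent black holes u, v, or (Rule 2) the vertex set of a connected component of the induced subgraph G[P ∖ N[S ∪ T]], and let G' be obtained from G by contracting W to a single new black hole b adjacent exactly to the vertices of N(W) ∖ W. If there is a plan for Galactic 1IUMAPF from S to T in G, then there is a plan for Galactic 1IUMAPF from S to T in G'. -/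
open SimpleGraph

/-- A configuration of `n` agents is distance-`r` independent if distinct agents are
at graph distance at least `r + 1`. A plan for `rIUMAPF` of length `ℓ` from `S` to `T`:
the occupied sets at times `0` and `ℓ` are `S` and `T`, every configuration up to time `ℓ`
is distance-`r` independent, and each agent moves within closed neighborhoods. -/
def IsPlan {V : Type*} (G : SimpleGraph V) (r n ℓ : ℕ) (Q : ℕ → Fin n → V)
    (S T : Set V) : Prop :=
  Set.range (Q 0) = S ∧ Set.range (Q ℓ) = T ∧
  (∀ k ≤ ℓ, ∀ i j : Fin n, i ≠ j → r + 1 ≤ G.dist (Q k i) (Q k j)) ∧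
  (∀ k < ℓ, ∀ i : Fin n, Q (k + 1) i = Q k i ∨ G.Adj (Q k i) (Q (k + 1) i))

/-- Galactic distance-`r` independence: no two distinct agents on planets are within
distance `r` in the planet-induced subgraph (`edist = ⊤` when unreachable). -/
def GalIndep {V : Type*} (G : SimpleGraph V) (P : Set V) (r : ℕ) {n : ℕ}
    (Q : Fin n → V) : Prop :=
  ∀ i j : Fin n, i ≠ j → ∀ (hi : Q i ∈ P) (hj : Q j ∈ P),
    (r : ℕ∞) < (G.induce P).edist ⟨Q i, hi⟩ ⟨Q j, hj⟩

/-- A plan for Galactic `rIUMAPF` from `S` to `T`. -/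
def GalPlan {V : Type*} (G : SimpleGraph V) (P : Set V) (r n : ℕ)
    (S T : Set V) : Prop :=
  ∃ (ℓ : ℕ) (Q : ℕ → Fin n → V),
    Set.range (Q 0) = S ∧ Set.range (Q ℓ) = T ∧
    (∀ k ≤ ℓ, GalIndep G P r (Q k)) ∧
    (∀ k < ℓ, ∀ i : Fin n, Q (k + 1) i = Q k i ∨ G.Adj (Q k i) (Q (k + 1) i))

/-- Closed neighborhood `N[X]` of a set of vertices. -/
def nclSet {V : Type*} (G : SimpleGraph V) (X : Set V) : Set V :=
  X ∪ {v | ∃ u ∈ X, G.Adj u v}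

/-- Contraction of a vertex set `W` to a single new vertex (`Sum.inr ()`), which is
adjacent exactly to the vertices of `N(W) ∖ W`; everything else is unchanged. -/
def contractSet {V : Type*} (G : SimpleGraph V) (W : Set V) :
    SimpleGraph ({v : V // v ∉ W} ⊕ Unit) where
  Adj x y :=
    match x, y with
    | Sum.inl u, Sum.inl v => G.Adj u.1 v.1
    | Sum.inl u, Sum.inr _ => ∃ w ∈ W, G.Adj u.1 w
    | Sum.inr _, Sum.inl v => ∃ w ∈ W, G.Adj v.1 w
    | Sum.inr _, Sum.inr _ => False
  symm := by
    constructor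
    rintro (u | u) (v | v) h
    · exact h.symm
    · exact h
    · exact h
    · exact h
  loopless := by
    constructor
    rintro (u | u) h
    · exact G.irrefl h
    · exact h

/-- The planets of the contracted galactic graph: the surviving copies of planets. -/
def contractPlanets {V : Type*} (P W : Set V) : Set ({v : V // v ∉ W} ⊕ Unit) :=
  {x | ∃ u : {v : V // v ∉ W}, u.1 ∈ P ∧ x = Sum.inl u}

/-- A subset of `V ∖ W` viewed inside the contracted vertex set. -/
def liftSet {V : Type*} (W X : Set V) : Set ({v : V // v ∉ W} ⊕ Unit) :=
  {x | ∃ u : {v : V // v ∉ W}, u.1 ∈ X ∧ x = Sum.inl u}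

/-- The infinite grid graph on `ℤ × ℤ`: adjacency is unit `L1` distance. -/
def gridGraph : SimpleGraph (ℤ × ℤ) where
  Adj p q := |p.1 - q.1| + |p.2 - q.2| = 1
  symm := by
    constructor
    intro p q h
    rw [abs_sub_comm q.1, abs_sub_comm q.2]
    exact h
  loopless := by
    constructor
    intro p h
    simp at h


lemma one_lt_edist_iff {V : Type*} (G : SimpleGraph V) (x y : V) :
    (1 : ℕ∞) < G.edist x y ↔ x ≠ y ∧ ¬ G.Adj x y := by
  constructor
  · intro h
    refine ⟨?_, ?_⟩
    · rintro rfl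
      simp [SimpleGraph.edist_self] at h
    · intro hadj
      rw [SimpleGraph.edist_eq_one_iff_adj.mpr hadj] at h
      exact lt_irrefl _ h
  · rintro ⟨hne, hadj⟩
    by_contra h
    push_neg at h
    rcases lt_or_eq_of_le h with h' | h'
    · exact hne (SimpleGraph.edist_eq_zero_iff.mp (ENat.lt_one_iff_eq_zero.mp h'))
    · exact hadj (SimpleGraph.edist_eq_one_iff_adj.mp h'.symm.symm)

/-- applying either reduction rule (contracting two adjacent black holes,
or contracting a connected component of `G[P ∖ N[S ∪ T]]`) preserves the existence of a
plan for Galactic 1IUMAPF in the forward direction. -/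
theorem contract_preserves_galactic_plan {V : Type*} [Fintype V] (G : SimpleGraph V)
    (P : Set V) (n : ℕ) (S T : Set V) (hSP : S ⊆ P) (hTP : T ⊆ P)
    (hS : S.ncard = n) (hT : T.ncard = n)
    (hbh : nclSet G (S ∪ T) ⊆ P)
    (W : Set V)
    (hW : (∃ u v : V, u ∉ P ∧ v ∉ P ∧ G.Adj u v ∧ W = {u, v}) ∨
      (∃ c : (G.induce (P \ nclSet G (S ∪ T))).ConnectedComponent,
        W = Subtype.val ''
          {v | (G.induce (P \ nclSet G (S ∪ T))).connectedComponentMk v = c}))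
    (hplan : GalPlan G P 1 n S T) :
    GalPlan (contractSet G W) (contractPlanets P W) 1 n (liftSet W S) (liftSet W T) := by
  classical
  -- S and T are disjoint from W
  have hdisj : ∀ x ∈ S ∪ T, x ∉ W := by
    intro x hx hxW
    rcases hW with ⟨u, v, hu, hv, _, rfl⟩ | ⟨c, rfl⟩
    · have hxP : x ∈ P := by
        rcases hx with hx | hx
        · exact hSP hx
        · exact hTP hx
      rcases hxW with rfl | rfl
      · exact hu hxP
      · exact hv hxP
    · rcases hxW with ⟨⟨y, hy⟩, _, rfl⟩
      exact hy.2 (Or.inl hx)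
  obtain ⟨ℓ, Q, hQ0, hQℓ, hind, hmove⟩ := hplan
  -- the projection map
  set f : V → ({v : V // v ∉ W} ⊕ Unit) := fun v =>
    if h : v ∈ W then Sum.inr () else Sum.inl ⟨v, h⟩ with hf
  refine ⟨ℓ, fun k i => f (Q k i), ?_, ?_, ?_, ?_⟩
  · -- range at time 0
    ext x
    constructor
    · rintro ⟨i, rfl⟩
      have hQS : Q 0 i ∈ S := hQ0 ▸ Set.mem_range_self i
      have hQW : Q 0 i ∉ W := hdisj _ (Or.inl hQS)
      exact ⟨⟨Q 0 i, hQW⟩, hQS, by simp [hf, hQW]⟩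
    · rintro ⟨u, huS, rfl⟩
      have : u.1 ∈ Set.range (Q 0) := hQ0 ▸ huS
      obtain ⟨i, hi⟩ := this
      refine ⟨i, ?_⟩
      simp only [hf, hi]
      rw [dif_neg u.2]
  · -- range at time ℓ
    ext x
    constructor
    · rintro ⟨i, rfl⟩
      have hQT : Q ℓ i ∈ T := hQℓ ▸ Set.mem_range_self i
      have hQW : Q ℓ i ∉ W := hdisj _ (Or.inr hQT)
      exact ⟨⟨Q ℓ i, hQW⟩, hQT, by simp [hf, hQW]⟩
    · rintro ⟨u, huT, rfl⟩
      have : u.1 ∈ Set.range (Q ℓ) := hQℓ ▸ huT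
      obtain ⟨i, hi⟩ := this
      refine ⟨i, ?_⟩
      simp only [hf, hi]
      rw [dif_neg u.2]
  · -- independence
    intro k hk i j hij hi hj
    obtain ⟨ui, huiP, hui⟩ := hi
    obtain ⟨uj, hujP, huj⟩ := hj
    -- f (Q k i) = Sum.inl ui forces Q k i ∉ W and Q k i = ui.1
    have hiW : Q k i ∉ W := by
      intro h; simp [hf, h] at hui
    have hjW : Q k j ∉ W := by
      intro h; simp [hf, h] at huj
    have hui' : Q k i = ui.1 := by
      simp only [hf, dif_neg hiW] at hui
      exact congrArg Subtype.val (Sum.inl.inj hui)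
    have huj' : Q k j = uj.1 := by
      simp only [hf, dif_neg hjW] at huj
      exact congrArg Subtype.val (Sum.inl.inj huj)
    have hiP : Q k i ∈ P := hui' ▸ huiP
    have hjP : Q k j ∈ P := huj' ▸ hujP
    have hold := hind k hk i j hij hiP hjP
    simp only [Nat.cast_one] at hold ⊢
    rw [one_lt_edist_iff] at hold
    rw [one_lt_edist_iff]
    constructor
    · intro heq
      apply hold.1
      have h2 : f (Q k i) = f (Q k j) := congrArg Subtype.val heq
      simp only [hf, dif_neg hiW, dif_neg hjW] at h2
      have h3 : Q k i = Q k j := congrArg Subtype.val (Sum.inl.inj h2)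
      exact Subtype.ext h3
    · intro hadj
      apply hold.2
      have h2 : (contractSet G W).Adj (f (Q k i)) (f (Q k j)) := hadj
      simp only [hf, dif_neg hiW, dif_neg hjW] at h2
      exact h2
  · -- moves
    intro k hk i
    rcases hmove k hk i with h | h
    · exact Or.inl (congrArg f h)
    · by_cases h1 : Q k i ∈ W <;> by_cases h2 : Q (k + 1) i ∈ W
      · exact Or.inl (by simp [hf, h1, h2])
      · refine Or.inr ?_
        simp only [hf, dif_pos h1, dif_neg h2]
        exact ⟨Q k i, h1, h.symm⟩
      · refine Or.inr ?_
        simp only [hf, dif_neg h1, dif_pos h2]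
        exact ⟨Q (k + 1) i, h2, h⟩
      · refine Or.inr ?_
        simp only [hf, dif_neg h1, dif_neg h2]
        exact h
end

section
/- Let G = (P ∪ B, E) be a finite galactic graph, S, T ⊆ P with |S| = |T| = n and no black hole in N[S ∪ T], and let u, v ∈ B be two adjacent black holes. Let G' be obtained from G by contracting {u, v} to a single black hole b adjacent exactly to N({u,v}) ∖ {u,v}. Then there is a plan for Galactic 1IUMAPF from S to T in G if and only if there is a plan for Galactic 1IUMAPF from S to T in G'. -/
open SimpleGraph

/-! ### Auxiliary machinery for the contraction theorem -/

section ContractAux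

open SimpleGraph

lemma iso_edist_le {α β : Type*} {G : SimpleGraph α} {H : SimpleGraph β} (φ : G ≃g H) (a b : α) :
    H.edist (φ a) (φ b) ≤ G.edist a b := by
  rw [SimpleGraph.edist_eq_sInf (G := G)]
  refine le_sInf ?_
  rintro x ⟨p, rfl⟩
  simpa using SimpleGraph.edist_le (p.map φ.toHom)

lemma iso_edist_eq {α β : Type*} {G : SimpleGraph α} {H : SimpleGraph β} (φ : G ≃g H) (a b : α) :
    H.edist (φ a) (φ b) = G.edist a b := by
  refine le_antisymm (iso_edist_le φ a b) ?_
  have := iso_edist_le φ.symm (φ a) (φ b)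
  simpa using this

variable {V : Type*}

/-- The isomorphism between the planet-induced subgraphs before and after contraction,
when the contracted set is disjoint from the planets. -/
def contractIso (G : SimpleGraph V) (P W : Set V) (hPW : ∀ x ∈ P, x ∉ W) :
    G.induce P ≃g (contractSet G W).induce (contractPlanets P W) where
  toFun := fun x => ⟨Sum.inl ⟨x.1, hPW x.1 x.2⟩, ⟨⟨x.1, hPW x.1 x.2⟩, x.2, rfl⟩⟩
  invFun := fun y =>
    match y with
    | ⟨Sum.inl w, hy⟩ => ⟨w.1, by
        obtain ⟨u', hu', he⟩ := hy; rw [Sum.inl.injEq] at he; rw [he]; exact hu'⟩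
    | ⟨Sum.inr _, hy⟩ => False.elim (by obtain ⟨u', -, he⟩ := hy; cases he)
  left_inv := fun x => rfl
  right_inv := fun y => by
    match y with
    | ⟨Sum.inl w, hy⟩ => rfl
    | ⟨Sum.inr _, hy⟩ => exact False.elim (by obtain ⟨u', -, he⟩ := hy; cases he)
  map_rel_iff' := Iff.rfl

lemma contract_edist_eq (G : SimpleGraph V) (P W : Set V) (hPW : ∀ x ∈ P, x ∉ W)
    {x y : V} (hx : x ∈ P) (hy : y ∈ P) :
    ((contractSet G W).induce (contractPlanets P W)).edist
      ⟨Sum.inl ⟨x, hPW x hx⟩, ⟨⟨x, hPW x hx⟩, hx, rfl⟩⟩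
      ⟨Sum.inl ⟨y, hPW y hy⟩, ⟨⟨y, hPW y hy⟩, hy, rfl⟩⟩
    = (G.induce P).edist ⟨x, hx⟩ ⟨y, hy⟩ :=
  iso_edist_eq (contractIso G P W hPW) ⟨x, hx⟩ ⟨y, hy⟩

/-- Transfer independence from the contracted graph back to the original graph. -/
lemma indep_pull (G : SimpleGraph V) (P W : Set V) (hPW : ∀ x ∈ P, x ∉ W) {n : ℕ}
    {Q' : Fin n → ({v : V // v ∉ W} ⊕ Unit)}
    (hind : GalIndep (contractSet G W) (contractPlanets P W) 1 Q')
    {R : Fin n → V}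
    (hR : ∀ i, R i ∈ P → ∃ w : {v : V // v ∉ W}, Q' i = Sum.inl w ∧ R i = w.1) :
    GalIndep G P 1 R := by
  intro i j hij hi hj
  obtain ⟨wi, hQi, hRi⟩ := hR i hi
  obtain ⟨wj, hQj, hRj⟩ := hR j hj
  have hiP : wi.1 ∈ P := hRi ▸ hi
  have hjP : wj.1 ∈ P := hRj ▸ hj
  have mi : (Sum.inl wi : {v : V // v ∉ W} ⊕ Unit) ∈ contractPlanets P W := ⟨wi, hiP, rfl⟩
  have mj : (Sum.inl wj : {v : V // v ∉ W} ⊕ Unit) ∈ contractPlanets P W := ⟨wj, hjP, rfl⟩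
  have hkey := hind i j hij (hQi ▸ mi) (hQj ▸ mj)
  have e1 : (⟨R i, hi⟩ : ↥P) = ⟨wi.1, hiP⟩ := Subtype.ext hRi
  have e2 : (⟨R j, hj⟩ : ↥P) = ⟨wj.1, hjP⟩ := Subtype.ext hRj
  rw [e1, e2, ← contract_edist_eq G P W hPW hiP hjP]
  convert hkey using 2
  · exact Subtype.ext hQi.symm
  · exact Subtype.ext hQj.symm

/-- Transfer independence from the original graph to the contracted graph. -/
lemma indep_push (G : SimpleGraph V) (P W : Set V) (hPW : ∀ x ∈ P, x ∉ W) {n : ℕ}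
    {R : Fin n → V} (hind : GalIndep G P 1 R)
    {Q' : Fin n → ({v : V // v ∉ W} ⊕ Unit)}
    (hR : ∀ i, Q' i ∈ contractPlanets P W →
      ∃ w : {v : V // v ∉ W}, Q' i = Sum.inl w ∧ R i = w.1 ∧ R i ∈ P) :
    GalIndep (contractSet G W) (contractPlanets P W) 1 Q' := by
  intro i j hij hi hj
  obtain ⟨wi, hQi, hRi, hiP⟩ := hR i hi
  obtain ⟨wj, hQj, hRj, hjP⟩ := hR j hj
  have hkey := hind i j hij hiP hjP
  have e1 : (⟨Q' i, hi⟩ : ↥(contractPlanets P W))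
      = ⟨Sum.inl ⟨R i, hPW _ hiP⟩, ⟨⟨R i, hPW _ hiP⟩, hiP, rfl⟩⟩ := by
    refine Subtype.ext ?_
    show Q' i = Sum.inl ⟨R i, hPW _ hiP⟩
    rw [hQi]
    congr 1
    exact Subtype.ext hRi.symm
  have e2 : (⟨Q' j, hj⟩ : ↥(contractPlanets P W))
      = ⟨Sum.inl ⟨R j, hPW _ hjP⟩, ⟨⟨R j, hPW _ hjP⟩, hjP, rfl⟩⟩ := by
    refine Subtype.ext ?_
    show Q' j = Sum.inl ⟨R j, hPW _ hjP⟩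
    rw [hQj]
    congr 1
    exact Subtype.ext hRj.symm
  rw [e1, e2, contract_edist_eq G P W hPW hiP hjP]
  exact hkey

open Classical in
/-- Lift a vertex to the contracted vertex set. -/
noncomputable def liftCfg (W : Set V) (x : V) : {v : V // v ∉ W} ⊕ Unit :=
  if h : x ∈ W then Sum.inr () else Sum.inl ⟨x, h⟩

lemma liftCfg_of_not_mem (W : Set V) {x : V} (h : x ∉ W) : liftCfg W x = Sum.inl ⟨x, h⟩ :=
  dif_neg h

lemma liftCfg_of_mem (W : Set V) {x : V} (h : x ∈ W) : liftCfg W x = Sum.inr () :=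
  dif_pos h

lemma range_liftCfg (W : Set V) {n : ℕ} (f : Fin n → V) (X : Set V)
    (hf : Set.range f = X) (hX : ∀ x ∈ X, x ∉ W) :
    Set.range (fun i => liftCfg W (f i)) = liftSet W X := by
  ext y
  constructor
  · rintro ⟨i, rfl⟩
    have hfi : f i ∈ X := hf ▸ Set.mem_range_self i
    exact ⟨⟨f i, hX _ hfi⟩, hfi, (liftCfg_of_not_mem W (hX _ hfi))⟩
  · rintro ⟨w, hwX, rfl⟩
    have : w.1 ∈ Set.range f := hf.symm ▸ hwX
    obtain ⟨i, hi⟩ := this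
    refine ⟨i, ?_⟩
    show liftCfg W (f i) = Sum.inl w
    rw [hi, liftCfg_of_not_mem W (hX _ hwX)]

/-- Project a contracted vertex back, sending the black hole to `du`. -/
def dropCfg (W : Set V) (du : V) : ({v : V // v ∉ W} ⊕ Unit) → V
  | Sum.inl w => w.1
  | Sum.inr _ => du

lemma range_dropCfg (W : Set V) {n : ℕ} (f : Fin n → ({v : V // v ∉ W} ⊕ Unit))
    (X : Set V) (hX : ∀ x ∈ X, x ∉ W) (du : V)
    (hf : Set.range f = liftSet W X) :
    Set.range (fun i => dropCfg W du (f i)) = X := by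
  ext x
  constructor
  · rintro ⟨i, rfl⟩
    have hfi : f i ∈ liftSet W X := hf ▸ Set.mem_range_self i
    obtain ⟨w, hw, he⟩ := hfi
    show dropCfg W du (f i) ∈ X
    rw [he]
    exact hw
  · intro hx
    have : (Sum.inl ⟨x, hX x hx⟩ : {v : V // v ∉ W} ⊕ Unit) ∈ Set.range f :=
      hf.symm ▸ ⟨⟨x, hX x hx⟩, hx, rfl⟩
    obtain ⟨i, hi⟩ := this
    refine ⟨i, ?_⟩
    show dropCfg W du (f i) = x
    rw [hi]
    rfl

open Classical in
/-- Intermediate (odd-time) position of an agent simulating one contracted step. -/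
noncomputable def midCfg (G : SimpleGraph V) (W : Set V) (du : V) :
    ({v : V // v ∉ W} ⊕ Unit) → ({v : V // v ∉ W} ⊕ Unit) → V
  | Sum.inl _, Sum.inl w' => w'.1
  | Sum.inl w, Sum.inr _ => if h : ∃ x ∈ W, G.Adj w.1 x then h.choose else du
  | Sum.inr _, Sum.inl w' => if h : ∃ x ∈ W, G.Adj w'.1 x then h.choose else du
  | Sum.inr _, Sum.inr _ => du

/-- The doubled-time simulation of a contracted plan in the original graph. -/
noncomputable def simCfg (G : SimpleGraph V) (W : Set V) (du : V) {n : ℕ}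
    (Q' : ℕ → Fin n → ({v : V // v ∉ W} ⊕ Unit)) (k : ℕ) (i : Fin n) : V :=
  if k % 2 = 0 then dropCfg W du (Q' (k / 2) i)
  else midCfg G W du (Q' (k / 2) i) (Q' (k / 2 + 1) i)

lemma simCfg_even (G : SimpleGraph V) (W : Set V) (du : V) {n : ℕ}
    (Q' : ℕ → Fin n → ({v : V // v ∉ W} ⊕ Unit)) (m : ℕ) (i : Fin n) :
    simCfg G W du Q' (2 * m) i = dropCfg W du (Q' m i) := by
  have h1 : (2 * m) % 2 = 0 := by omega
  have h2 : (2 * m) / 2 = m := by omega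
  simp only [simCfg]
  rw [if_pos h1, h2]

lemma simCfg_odd (G : SimpleGraph V) (W : Set V) (du : V) {n : ℕ}
    (Q' : ℕ → Fin n → ({v : V // v ∉ W} ⊕ Unit)) (m : ℕ) (i : Fin n) :
    simCfg G W du Q' (2 * m + 1) i = midCfg G W du (Q' m i) (Q' (m + 1) i) := by
  have h2 : (2 * m + 1) / 2 = m := by omega
  simp only [simCfg]
  rw [if_neg (by omega), h2]

end ContractAux

/-- contracting two adjacent black holes to a single black hole preserves
the existence of a plan for Galactic 1IUMAPF (in both directions). -/
theorem contract_adjacent_blackholes_iff {V : Type*} [Fintype V] (G : SimpleGraph V)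
    (P : Set V) (n : ℕ) (S T : Set V) (hSP : S ⊆ P) (hTP : T ⊆ P)
    (hS : S.ncard = n) (hT : T.ncard = n)
    (hbh : nclSet G (S ∪ T) ⊆ P)
    (u v : V) (hu : u ∉ P) (hv : v ∉ P) (huv : G.Adj u v) :
    GalPlan G P 1 n S T ↔
      GalPlan (contractSet G ({u, v} : Set V)) (contractPlanets P ({u, v} : Set V)) 1 n
        (liftSet ({u, v} : Set V) S) (liftSet ({u, v} : Set V) T) := by
  classical
  set W : Set V := ({u, v} : Set V) with hWdef
  have hPW : ∀ x ∈ P, x ∉ W := by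
    intro x hx hxW
    rcases hxW with rfl | rfl
    · exact hu hx
    · exact hv hx
  have hWP : ∀ x ∈ W, x ∉ P := fun x hxW hxP => hPW x hxP hxW
  have huW : u ∈ W := Or.inl rfl
  have hvW : v ∈ W := Or.inr rfl
  have huP : u ∉ P := hu
  constructor
  · -- forward direction
    rintro ⟨ℓ, Q, h0, hTr, hind, hmove⟩
    refine ⟨ℓ, fun k i => liftCfg W (Q k i),
      range_liftCfg W (Q 0) S h0 (fun x hx => hPW x (hSP hx)),
      range_liftCfg W (Q ℓ) T hTr (fun x hx => hPW x (hTP hx)),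
      fun k hk => indep_push G P W hPW (hind k hk) ?_, fun k hk i => ?_⟩
    · -- independence transfer
      intro i hi
      replace hi : liftCfg W (Q k i) ∈ contractPlanets P W := hi
      by_cases hiW : Q k i ∈ W
      · exfalso
        rw [liftCfg_of_mem W hiW] at hi
        obtain ⟨_, _, he⟩ := hi
        cases he
      · refine ⟨⟨Q k i, hiW⟩, liftCfg_of_not_mem W hiW, rfl, ?_⟩
        have hi2 := hi
        rw [liftCfg_of_not_mem W hiW] at hi2
        obtain ⟨u', hu'P, he⟩ := hi2
        rw [Sum.inl.injEq] at he
        have : Q k i = u'.1 := congrArg Subtype.val he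
        rw [this]
        exact hu'P
    · -- moves transfer
      show liftCfg W (Q (k + 1) i) = liftCfg W (Q k i) ∨
        (contractSet G W).Adj (liftCfg W (Q k i)) (liftCfg W (Q (k + 1) i))
      rcases hmove k hk i with he | ha
      · left; rw [he]
      · by_cases h1 : Q k i ∈ W <;> by_cases h2 : Q (k + 1) i ∈ W
        · left; rw [liftCfg_of_mem W h1, liftCfg_of_mem W h2]
        · right
          rw [liftCfg_of_mem W h1, liftCfg_of_not_mem W h2]
          exact ⟨Q k i, h1, ha.symm⟩
        · right
          rw [liftCfg_of_not_mem W h1, liftCfg_of_mem W h2]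
          exact ⟨Q (k + 1) i, h2, ha⟩
        · right
          rw [liftCfg_of_not_mem W h1, liftCfg_of_not_mem W h2]
          exact ha
  · -- backward direction
    rintro ⟨ℓ, Q', h0, hTr, hind, hmove⟩
    refine ⟨2 * ℓ, simCfg G W u Q', ?_, ?_, ?_, ?_⟩
    · -- initial range
      have he : simCfg G W u Q' 0 = fun i => dropCfg W u (Q' 0 i) :=
        funext fun i => simCfg_even G W u Q' 0 i
      rw [he]
      exact range_dropCfg W (Q' 0) S (fun x hx => hPW x (hSP hx)) u h0
    · -- final range
      have he : simCfg G W u Q' (2 * ℓ) = fun i => dropCfg W u (Q' ℓ i) :=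
        funext fun i => simCfg_even G W u Q' ℓ i
      rw [he]
      exact range_dropCfg W (Q' ℓ) T (fun x hx => hPW x (hTP hx)) u hTr
    · -- independence
      intro k hk
      rcases Nat.mod_two_eq_zero_or_one k with hpar | hpar
      · -- even time
        obtain ⟨m, rfl⟩ : ∃ m, k = 2 * m := ⟨k / 2, by omega⟩
        refine indep_pull G P W hPW (hind m (by omega)) ?_
        intro i hi
        have hvi : simCfg G W u Q' (2 * m) i = dropCfg W u (Q' m i) := simCfg_even G W u Q' m i
        cases hQm : Q' m i with
        | inl w =>
          refine ⟨w, rfl, ?_⟩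
          rw [hvi, hQm]
          rfl
        | inr _ =>
          exfalso
          rw [hvi, hQm] at hi
          exact huP hi
      · -- odd time
        obtain ⟨m, rfl⟩ : ∃ m, k = 2 * m + 1 := ⟨k / 2, by omega⟩
        have hmℓ : m + 1 ≤ ℓ := by omega
        refine indep_pull G P W hPW (hind (m + 1) hmℓ) ?_
        intro i hi
        have hvi : simCfg G W u Q' (2 * m + 1) i = midCfg G W u (Q' m i) (Q' (m + 1) i) :=
          simCfg_odd G W u Q' m i
        cases hQm : Q' m i with
        | inl w =>
          cases hQm1 : Q' (m + 1) i with
          | inl w' =>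
            refine ⟨w', rfl, ?_⟩
            rw [hvi, hQm, hQm1]
            rfl
          | inr _ =>
            exfalso
            rw [hvi, hQm, hQm1] at hi
            simp only [midCfg] at hi
            split_ifs at hi with hex
            · exact hWP _ hex.choose_spec.1 hi
            · exact huP hi
        | inr _ =>
          cases hQm1 : Q' (m + 1) i with
          | inl w' =>
            exfalso
            rw [hvi, hQm, hQm1] at hi
            simp only [midCfg] at hi
            split_ifs at hi with hex
            · exact hWP _ hex.choose_spec.1 hi
            · exact huP hi
          | inr _ =>
            exfalso
            rw [hvi, hQm, hQm1] at hi
            exact huP hi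
    · -- moves
      intro k hk i
      rcases Nat.mod_two_eq_zero_or_one k with hpar | hpar
      · -- even step: 2*m → 2*m+1
        obtain ⟨m, rfl⟩ : ∃ m, k = 2 * m := ⟨k / 2, by omega⟩
        have hmℓ : m < ℓ := by omega
        rw [simCfg_even G W u Q' m i, simCfg_odd G W u Q' m i]
        rcases hmove m hmℓ i with heq | hadj
        · cases hQm : Q' m i with
          | inl w => rw [heq, hQm]; left; rfl
          | inr _ => rw [heq, hQm]; left; rfl
        · revert hadj
          cases hQm : Q' m i with
          | inl w =>
            cases hQm1 : Q' (m + 1) i with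
            | inl w' =>
              intro hadj
              right
              exact hadj
            | inr _ =>
              intro hadj
              right
              have hadj' : ∃ x ∈ W, G.Adj w.1 x := hadj
              show G.Adj w.1 (midCfg G W u (Sum.inl w) (Sum.inr ()))
              simp only [midCfg]
              rw [dif_pos hadj']
              exact hadj'.choose_spec.2
          | inr val =>
            cases hQm1 : Q' (m + 1) i with
            | inl w' =>
              intro hadj
              have hadj' : ∃ x ∈ W, G.Adj w'.1 x := hadj
              show midCfg G W u (Sum.inr val) (Sum.inl w') = dropCfg W u (Sum.inr val) ∨
                G.Adj (dropCfg W u (Sum.inr val)) (midCfg G W u (Sum.inr val) (Sum.inl w'))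
              simp only [midCfg, dropCfg]
              rw [dif_pos hadj']
              rcases hadj'.choose_spec.1 with hc | hc
              · left; exact hc
              · right; rw [hc]; exact huv
            | inr _ =>
              intro hadj
              exact (hadj : False).elim
      · -- odd step: 2*m+1 → 2*(m+1)
        obtain ⟨m, rfl⟩ : ∃ m, k = 2 * m + 1 := ⟨k / 2, by omega⟩
        have hmℓ : m < ℓ := by omega
        rw [show 2 * m + 1 + 1 = 2 * (m + 1) from by ring]
        rw [simCfg_odd G W u Q' m i, simCfg_even G W u Q' (m + 1) i]
        rcases hmove m hmℓ i with heq | hadj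
        · cases hQm : Q' m i with
          | inl w => rw [heq, hQm]; left; rfl
          | inr _ => rw [heq, hQm]; left; rfl
        · revert hadj
          cases hQm : Q' m i with
          | inl w =>
            cases hQm1 : Q' (m + 1) i with
            | inl w' =>
              intro hadj
              left; rfl
            | inr val =>
              intro hadj
              have hadj' : ∃ x ∈ W, G.Adj w.1 x := hadj
              show dropCfg W u (Sum.inr val) = midCfg G W u (Sum.inl w) (Sum.inr val) ∨
                G.Adj (midCfg G W u (Sum.inl w) (Sum.inr val)) (dropCfg W u (Sum.inr val))
              simp only [midCfg, dropCfg]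
              rw [dif_pos hadj']
              rcases hadj'.choose_spec.1 with hc | hc
              · left; exact hc.symm
              · right; rw [hc]; exact huv.symm
          | inr val =>
            cases hQm1 : Q' (m + 1) i with
            | inl w' =>
              intro hadj
              have hadj' : ∃ x ∈ W, G.Adj w'.1 x := hadj
              right
              show G.Adj (midCfg G W u (Sum.inr val) (Sum.inl w')) w'.1
              simp only [midCfg]
              rw [dif_pos hadj']
              exact hadj'.choose_spec.2.symm
            | inr _ =>
              intro hadj
              exact (hadj : False).elim
end

section
/- Let P_m be the path graph on m vertices and let k ∈ ℕ with m ≥ 2k+1. Then for every pair of independent sets X, Y of P_m with |X| = |Y| = k, there exists a plan for 1IUMAPF from X to Y in P_m (i.e., a plan using only the vertices of the path). -/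
open SimpleGraph

lemma walk_len_lb' {m : ℕ} {u v : Fin m} (p : (pathGraph m).Walk u v) :
    v.val ≤ u.val + p.length := by
  induction p with
  | nil => simp
  | cons h p ih =>
    rw [pathGraph_adj] at h
    simp only [Walk.length_cons]
    omega

lemma two_le_path_dist' {m : ℕ} {u v : Fin m} (h : u.val + 2 ≤ v.val) :
    2 ≤ (pathGraph m).dist u v := by
  obtain ⟨n, rfl⟩ : ∃ n, m = n + 1 := ⟨m - 1, by omega⟩
  obtain ⟨p, hp⟩ := (pathGraph_connected n).exists_walk_length_eq_dist u v
  have := walk_len_lb' p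
  omega

lemma sorted_enum' {m k : ℕ} (X : Set (Fin m)) (hX : X.ncard = k)
    (hind : ∀ u ∈ X, ∀ v ∈ X, u ≠ v → ¬ (pathGraph m).Adj u v) :
    ∃ x : Fin k → Fin m, Set.range x = X ∧
      ∀ i j : Fin k, i < j → (x i).val + 2 ≤ (x j).val := by
  have hfin : X.Finite := X.toFinite
  have hcard : hfin.toFinset.card = k := by
    rw [← hX, Set.ncard_eq_toFinset_card X hfin]
  set e := hfin.toFinset.orderIsoOfFin hcard with he
  refine ⟨fun i => (e i : Fin m), ?_, ?_⟩
  · ext v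
    constructor
    · rintro ⟨i, rfl⟩
      exact hfin.mem_toFinset.mp (e i).2
    · intro hv
      exact ⟨e.symm ⟨v, hfin.mem_toFinset.mpr hv⟩, by simp⟩
  · intro i j hij
    have hlt : (e i : Fin m) < (e j : Fin m) := e.strictMono hij
    have hmi : (e i : Fin m) ∈ X := hfin.mem_toFinset.mp (e i).2
    have hmj : (e j : Fin m) ∈ X := hfin.mem_toFinset.mp (e j).2
    have hne : (e i : Fin m) ≠ (e j : Fin m) := ne_of_lt hlt
    have hadj := hind _ hmi _ hmj hne
    rw [pathGraph_adj] at hadj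
    push_neg at hadj
    have : ((e i : Fin m) : ℕ) < ((e j : Fin m) : ℕ) := hlt
    show ((e i : Fin m) : ℕ) + 2 ≤ ((e j : Fin m) : ℕ)
    omega

/-- on the path graph with `m ≥ 2k + 1` vertices, any two independent sets
of size `k` are connected by a plan for 1IUMAPF. -/
theorem path_oneIUMAPF_feasible (m k : ℕ) (hm : 2 * k + 1 ≤ m)
    (X Y : Set (Fin m)) (hX : X.ncard = k) (hY : Y.ncard = k)
    (hXind : ∀ u ∈ X, ∀ v ∈ X, u ≠ v → ¬ (SimpleGraph.pathGraph m).Adj u v)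
    (hYind : ∀ u ∈ Y, ∀ v ∈ Y, u ≠ v → ¬ (SimpleGraph.pathGraph m).Adj u v) :
    ∃ (ℓ : ℕ) (Q : ℕ → Fin k → Fin m), IsPlan (SimpleGraph.pathGraph m) 1 k ℓ Q X Y := by
  obtain ⟨x, hxr, hxg⟩ := sorted_enum' X hX hXind
  obtain ⟨y, hyr, hyg⟩ := sorted_enum' Y hY hYind
  set f : ℕ → Fin k → ℕ := fun t i =>
    if (x i : ℕ) ≤ (y i : ℕ) then min ((x i : ℕ) + t) (y i : ℕ)
    else max ((x i : ℕ) - t) (y i : ℕ) with hf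
  have hflt : ∀ t i, f t i < m := by
    intro t i
    have h1 : (x i : ℕ) < m := (x i).2
    have h2 : (y i : ℕ) < m := (y i).2
    simp only [hf]
    split <;> omega
  set Q : ℕ → Fin k → Fin m := fun t i => ⟨f t i, hflt t i⟩ with hQ
  have h0 : ∀ i, Q 0 i = x i := by
    intro i; apply Fin.ext; simp only [hQ, hf]; split <;> omega
  have hend : ∀ i, Q m i = y i := by
    intro i; apply Fin.ext
    have h1 : (x i : ℕ) < m := (x i).2
    have h2 : (y i : ℕ) < m := (y i).2
    simp only [hQ, hf]; split <;> omega
  have hstep : ∀ t i, f (t+1) i = f t i ∨ f (t+1) i = f t i + 1 ∨ f t i = f (t+1) i + 1 := by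
    intro t i; simp only [hf]; split <;> omega
  have hgap : ∀ t, ∀ i j : Fin k, i < j → f t i + 2 ≤ f t j := by
    intro t i j hij
    have h1 := hxg i j hij
    have h2 := hyg i j hij
    simp only [hf]; split <;> split <;> omega
  refine ⟨m, Q, ?_, ?_, ?_, ?_⟩
  · rw [show Q 0 = x from funext h0]; exact hxr
  · rw [show Q m = y from funext hend]; exact hyr
  · intro t _ i j hij
    rcases hij.lt_or_gt with h | h
    · exact two_le_path_dist' (hgap t i j h)
    · rw [SimpleGraph.dist_comm]
      exact two_le_path_dist' (hgap t j i h)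
  · intro t _ i
    rcases hstep t i with h | h | h
    · exact Or.inl (Fin.ext h)
    · exact Or.inr (pathGraph_adj.mpr (Or.inl h.symm))
    · exact Or.inr (pathGraph_adj.mpr (Or.inr h.symm))
end
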